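/- The following hold: (1) if (√(1+2c)-1)/√(2c) < R < (1-√(1-2c))/√(2c), then there exists θ_c ∈ (0, π/2) such that γ_R ∩ γ̃_R = {e^{iθ_c}, e^{-iθ_c}, -e^{iθ_c}, -e^{-iθ_c}} (four distinct points on the unit circle) and |G(e^{iθ_c})| = R; (2) if R = (1-√(1-2c))/√(2c) then γ_R ∩ γ̃_R = {i, -i}; (3) if R = (√(1+2c)-1)/√(2c) then γ_R ∩ γ̃_R = {1, -1}. -/

import Mathlib

/-- `c = a/(1+a²)`. -/
noncomputable def cOf (a : ℝ) : ℝ := a / (1 + a ^ 2)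

/-- The branch of the logarithm with argument in `(-π/2, 3π/2]`:
`L(z) = Log(-iz) + iπ/2` where `Log` is the principal branch. -/
noncomputable def Lbr (z : ℂ) : ℂ :=
  Complex.log (-Complex.I * z) + Complex.I * ((Real.pi : ℂ) / 2)

/-- The branch `√(ω² + 2c) = exp((1/2)L(ω + i√(2c)) + (1/2)L(ω - i√(2c)))`. -/
noncomputable def sqBr (a : ℝ) (ω : ℂ) : ℂ :=
  Complex.exp ((1 / 2 : ℂ) * Lbr (ω + Complex.I * (Real.sqrt (2 * cOf a) : ℂ)) +
    (1 / 2 : ℂ) * Lbr (ω - Complex.I * (Real.sqrt (2 * cOf a) : ℂ)))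

/-- `G(ω) = (ω - √(ω² + 2c))/√(2c)`. -/
noncomputable def Gbr (a : ℝ) (ω : ℂ) : ℂ :=
  (ω - sqBr a ω) / (Real.sqrt (2 * cOf a) : ℂ)

/-- The branch cuts `𝒞 = i·((-∞, -1/√(2c)] ∪ [-√(2c), √(2c)] ∪ [1/√(2c), ∞))`. -/
def cuts (a : ℝ) : Set ℂ :=
  {z : ℂ | ∃ t : ℝ, z = Complex.I * (t : ℂ) ∧
    (t ≤ -(1 / Real.sqrt (2 * cOf a)) ∨
      (-Real.sqrt (2 * cOf a) ≤ t ∧ t ≤ Real.sqrt (2 * cOf a)) ∨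
      1 / Real.sqrt (2 * cOf a) ≤ t)}

/-- The ellipse `γ_R = {√(c/2)·(R e^{iθ} - R⁻¹ e^{-iθ}) : θ ∈ ℝ}`. -/
def ellipse (a R : ℝ) : Set ℂ :=
  {z : ℂ | ∃ θ : ℝ, z = (Real.sqrt (cOf a / 2) : ℂ) *
    ((R : ℂ) * Complex.exp (Complex.I * (θ : ℂ)) -
      ((R : ℂ))⁻¹ * Complex.exp (-(Complex.I * (θ : ℂ))))}

/-- `γ̃_R`, the image of `γ_R` under inversion `ω ↦ 1/ω`. -/
def ellipseInv (a R : ℝ) : Set ℂ := {z : ℂ | ∃ ω ∈ ellipse a R, z = ω⁻¹}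

lemma cOf_pos {a : ℝ} (ha0 : 0 < a) : 0 < cOf a := by
  unfold cOf; positivity

lemma cOf_lt {a : ℝ} (ha0 : 0 < a) (ha1 : a < 1) : 2 * cOf a < 1 := by
  unfold cOf
  rw [show 2 * (a / (1 + a ^ 2)) = 2*a / (1+a^2) by ring, div_lt_iff₀ (by positivity)]
  nlinarith [sq_nonneg (1 - a)]

lemma exp_I_pi_div_two : Complex.exp (Complex.I * ((Real.pi : ℂ) / 2)) = Complex.I := by
  have h : ((Real.pi : ℂ) / 2) = ((Real.pi / 2 : ℝ) : ℂ) := by push_cast; ring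
  rw [mul_comm, h, Complex.exp_mul_I]
  simp [← Complex.ofReal_cos, ← Complex.ofReal_sin]

lemma exp_Lbr {w : ℂ} (hw : w ≠ 0) : Complex.exp (Lbr w) = w := by
  unfold Lbr
  rw [Complex.exp_add, Complex.exp_log (by simp [hw]), exp_I_pi_div_two]
  rw [mul_comm (-Complex.I * w), ← mul_assoc, mul_neg, Complex.I_mul_I]
  ring

lemma Lbr_im {w : ℂ} : (Lbr w).im = Complex.arg (-Complex.I * w) + Real.pi / 2 := by
  unfold Lbr
  simp [Complex.log_im]

lemma Lbr_im_bounds {w : ℂ} (hw : 0 < w.re) :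
    -(Real.pi / 2) < (Lbr w).im ∧ (Lbr w).im < Real.pi / 2 := by
  rw [Lbr_im]
  have h1 : -Real.pi < Complex.arg (-Complex.I * w) := Complex.neg_pi_lt_arg _
  have h2 : Complex.arg (-Complex.I * w) < 0 := by
    rw [Complex.arg_neg_iff]
    simp [hw]
  constructor <;> linarith

lemma sqBr_sq {a : ℝ} (hc : 0 < cOf a) {z : ℂ} (hz : 0 < z.re) :
    (sqBr a z)^2 = z^2 + 2*cOf a := by
  unfold sqBr
  set t : ℝ := Real.sqrt (2 * cOf a) with ht
  have hw1 : z + Complex.I * (t:ℂ) ≠ 0 := by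
    intro h
    have := congrArg Complex.re h
    simp at this; linarith
  have hw2 : z - Complex.I * (t:ℂ) ≠ 0 := by
    intro h
    have := congrArg Complex.re h
    simp at this; linarith
  rw [sq, ← Complex.exp_add]
  have heq : (1/2:ℂ) * Lbr (z + Complex.I * (t:ℂ)) + (1/2:ℂ) * Lbr (z - Complex.I * (t:ℂ)) +
      ((1/2:ℂ) * Lbr (z + Complex.I * (t:ℂ)) + (1/2:ℂ) * Lbr (z - Complex.I * (t:ℂ)))
      = Lbr (z + Complex.I * (t:ℂ)) + Lbr (z - Complex.I * (t:ℂ)) := by ring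
  rw [heq, Complex.exp_add, exp_Lbr hw1, exp_Lbr hw2]
  have h1 : (z + Complex.I * (t:ℂ)) * (z - Complex.I * (t:ℂ)) = z^2 - Complex.I^2 * (t:ℂ)^2 := by
    ring
  rw [h1, Complex.I_sq]
  have h2 : ((t:ℂ))^2 = ((2 * cOf a : ℝ) : ℂ) := by
    rw [← Complex.ofReal_pow]
    norm_cast
    rw [ht, Real.sq_sqrt (by positivity)]
  rw [h2]
  push_cast
  ring

lemma sqBr_re_pos {a : ℝ} {z : ℂ} (hz : 0 < z.re) : 0 < (sqBr a z).re := by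
  unfold sqBr
  set t : ℝ := Real.sqrt (2 * cOf a) with ht
  set E := (1/2:ℂ) * Lbr (z + Complex.I * (t:ℂ)) + (1/2:ℂ) * Lbr (z - Complex.I * (t:ℂ)) with hE
  have hre1 : 0 < (z + Complex.I * (t:ℂ)).re := by simp [hz]
  have hre2 : 0 < (z - Complex.I * (t:ℂ)).re := by simp [hz]
  have hb1 := Lbr_im_bounds hre1
  have hb2 := Lbr_im_bounds hre2
  have hEim : E.im = (Lbr (z + Complex.I * (t:ℂ))).im / 2 +
      (Lbr (z - Complex.I * (t:ℂ))).im / 2 := by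
    rw [hE]
    simp [Complex.add_im, Complex.mul_im]
    ring
  rw [Complex.exp_re]
  apply mul_pos (Real.exp_pos _)
  apply Real.cos_pos_of_mem_Ioo
  constructor
  · rw [hEim]; linarith [hb1.1, hb2.1]
  · rw [hEim]; linarith [hb1.2, hb2.2]

lemma exp_I_ofReal (φ : ℝ) : Complex.exp (Complex.I * (φ:ℂ)) =
    ((Real.cos φ : ℝ) : ℂ) + ((Real.sin φ : ℝ) : ℂ) * Complex.I := by
  rw [mul_comm, Complex.exp_mul_I, ← Complex.ofReal_cos, ← Complex.ofReal_sin]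

lemma exp_neg_I_ofReal (φ : ℝ) : Complex.exp (-(Complex.I * (φ:ℂ))) =
    ((Real.cos φ : ℝ) : ℂ) - ((Real.sin φ : ℝ) : ℂ) * Complex.I := by
  have h : -(Complex.I * (φ:ℂ)) = Complex.I * ((-φ : ℝ):ℂ) := by push_cast; ring
  rw [h, exp_I_ofReal, Real.cos_neg, Real.sin_neg]
  push_cast; ring

lemma abs_Gbr {a R : ℝ} (ha0 : 0 < a) (ha1 : a < 1) (hR0 : 0 < R) (hR1 : R < 1)
    {z : ℂ} (hz : z ∈ ellipse a R) (hre : 0 < z.re) : ‖Gbr a z‖ = R := by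
  have hc : 0 < cOf a := cOf_pos ha0
  obtain ⟨φ, hφ⟩ := hz
  set s : ℝ := Real.sqrt (cOf a / 2) with hs
  set t : ℝ := Real.sqrt (2 * cOf a) with ht
  have hs0 : 0 < s := Real.sqrt_pos.mpr (by positivity)
  have ht0 : 0 < t := Real.sqrt_pos.mpr (by positivity)
  have hts : t = 2 * s := by
    rw [ht, hs, show 2 * cOf a = (cOf a / 2) * 2^2 by ring, Real.sqrt_mul (by positivity),
      Real.sqrt_sq (by norm_num)]
    ring
  have hzz : z = ((s*(R - R⁻¹)*Real.cos φ : ℝ) : ℂ) +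
      ((s*(R + R⁻¹)*Real.sin φ : ℝ) : ℂ) * Complex.I := by
    rw [hφ, exp_I_ofReal, exp_neg_I_ofReal]
    simp only [Complex.ofReal_mul, Complex.ofReal_sub, Complex.ofReal_add, Complex.ofReal_inv]
    ring
  have hzre : z.re = s*(R - R⁻¹)*Real.cos φ := by rw [hzz]; simp [Complex.cos_ofReal_re]
  have hRR : s * (R - R⁻¹) < 0 := by
    have : 1 < R⁻¹ := (one_lt_inv_iff₀).mpr ⟨hR0, hR1⟩
    have h2 : R - R⁻¹ < 0 := by linarith
    exact mul_neg_of_pos_of_neg hs0 h2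
  have hcφ : Real.cos φ < 0 := by
    rw [hzre] at hre
    by_contra h
    push_neg at h
    nlinarith [mul_nonneg h (neg_nonneg.mpr hRR.le)]
  set v : ℂ := ((-s*(R + R⁻¹)*Real.cos φ : ℝ) : ℂ) +
      ((-s*(R - R⁻¹)*Real.sin φ : ℝ) : ℂ) * Complex.I with hv
  have hvre : 0 < v.re := by
    have h1 : v.re = -s*(R + R⁻¹)*Real.cos φ := by rw [hv]; simp [Complex.cos_ofReal_re]
    rw [h1]
    have h2 : 0 < R + R⁻¹ := by positivity
    nlinarith [mul_pos (mul_pos hs0 h2) (neg_pos.mpr hcφ)]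
  have htrig : (Real.cos φ : ℂ)^2 + (Real.sin φ : ℂ)^2 = 1 := by
    exact_mod_cast Real.cos_sq_add_sin_sq φ
  have hrr : (R:ℂ) * ((R:ℂ))⁻¹ = 1 := mul_inv_cancel₀ (by exact_mod_cast hR0.ne')
  have hI : Complex.I^2 = -1 := Complex.I_sq
  have hsc : ((s:ℝ):ℂ)^2 = ((cOf a : ℝ) : ℂ)/2 := by
    rw [← Complex.ofReal_pow, hs, Real.sq_sqrt (by positivity)]
    push_cast
    ring
  have hv2 : v^2 = z^2 + 2*(cOf a : ℂ) := by
    rw [hv, hzz]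
    simp only [Complex.ofReal_mul, Complex.ofReal_sub, Complex.ofReal_add, Complex.ofReal_inv,
      Complex.ofReal_neg]
    linear_combination (4*(s:ℂ)^2*(R:ℂ)*((R:ℂ))⁻¹) * htrig
      - (4*(s:ℂ)^2*(R:ℂ)*((R:ℂ))⁻¹*((Real.sin φ:ℝ):ℂ)^2) * hI
      + (4*(s:ℂ)^2) * hrr + 4 * hsc
  have hsq := sqBr_sq hc hre
  have hsb := sqBr_re_pos (a := a) hre
  have heqv : sqBr a z = v := by
    have h2 : (sqBr a z)^2 = v^2 := by rw [hsq, hv2]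
    rcases sq_eq_sq_iff_eq_or_eq_neg.mp h2 with h | h
    · exact h
    · exfalso
      have : (sqBr a z).re = -v.re := by rw [h]; simp
      linarith [hsb, hvre, this]
  have ht2 : ((t:ℝ):ℂ) ≠ 0 := by exact_mod_cast ht0.ne'
  have hzv : z - v = ((t:ℝ):ℂ) * ((R:ℂ) * Complex.exp (Complex.I * (φ:ℂ))) := by
    rw [hzz, hv, exp_I_ofReal, hts]
    simp only [Complex.ofReal_mul, Complex.ofReal_sub, Complex.ofReal_add, Complex.ofReal_inv,
      Complex.ofReal_neg, Complex.ofReal_ofNat]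
    ring
  have hG : Gbr a z = (R:ℂ) * Complex.exp (Complex.I * (φ:ℂ)) := by
    unfold Gbr
    rw [heqv, ← ht, hzv, mul_div_cancel_left₀ _ ht2]
  rw [hG, norm_mul, Complex.norm_exp]
  simp [abs_of_pos hR0]

noncomputable def sA (a R : ℝ) : ℝ := Real.sqrt (cOf a / 2) * (R⁻¹ - R)
noncomputable def sB (a R : ℝ) : ℝ := Real.sqrt (cOf a / 2) * (R⁻¹ + R)

lemma sA_pos {a R : ℝ} (ha0 : 0 < a) (hR0 : 0 < R) (hR1 : R < 1) : 0 < sA a R := by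
  unfold sA
  have hc : 0 < cOf a := cOf_pos ha0
  have h1 : 1 < R⁻¹ := (one_lt_inv_iff₀).mpr ⟨hR0, hR1⟩
  have : 0 < Real.sqrt (cOf a / 2) := Real.sqrt_pos.mpr (by positivity)
  nlinarith

lemma sB_pos {a R : ℝ} (ha0 : 0 < a) (hR0 : 0 < R) : 0 < sB a R := by
  unfold sB
  have hc : 0 < cOf a := cOf_pos ha0
  have : 0 < Real.sqrt (cOf a / 2) := Real.sqrt_pos.mpr (by positivity)
  positivity

lemma sBA {a R : ℝ} (ha0 : 0 < a) (hR0 : 0 < R) :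
    sB a R ^ 2 - sA a R ^ 2 = 2 * cOf a := by
  unfold sA sB
  have hc : 0 < cOf a := cOf_pos ha0
  have hsq : Real.sqrt (cOf a / 2) ^ 2 = cOf a / 2 := Real.sq_sqrt (by positivity)
  have hr : R * R⁻¹ = 1 := mul_inv_cancel₀ hR0.ne'
  nlinarith [hsq, hr]

lemma mem_ellipse_iff {a R : ℝ} (ha0 : 0 < a) (hR0 : 0 < R) (hR1 : R < 1) (z : ℂ) :
    z ∈ ellipse a R ↔
      sB a R ^ 2 * z.re ^ 2 + sA a R ^ 2 * z.im ^ 2 = sA a R ^ 2 * sB a R ^ 2 := by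
  set s : ℝ := Real.sqrt (cOf a / 2) with hs
  have hc : 0 < cOf a := cOf_pos ha0
  have hs0 : 0 < s := Real.sqrt_pos.mpr (by positivity)
  have hA0 : 0 < sA a R := sA_pos ha0 hR0 hR1
  have hB0 : 0 < sB a R := sB_pos ha0 hR0
  constructor
  · rintro ⟨φ, hφ⟩
    have hzz : z = ((s*(R - R⁻¹)*Real.cos φ : ℝ) : ℂ) +
        ((s*(R + R⁻¹)*Real.sin φ : ℝ) : ℂ) * Complex.I := by
      rw [hφ, exp_I_ofReal, exp_neg_I_ofReal]
      simp only [Complex.ofReal_mul, Complex.ofReal_sub, Complex.ofReal_add, Complex.ofReal_inv]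
      ring
    have hzre : z.re = s*(R - R⁻¹)*Real.cos φ := by rw [hzz]; simp [Complex.cos_ofReal_re]
    have hzim : z.im = s*(R + R⁻¹)*Real.sin φ := by
      rw [hzz]; simp [Complex.sin_ofReal_re]
    rw [hzre, hzim]
    have htr := Real.cos_sq_add_sin_sq φ
    unfold sA sB
    rw [← hs]
    linear_combination ((s*(R⁻¹+R))^2 * (s*(R⁻¹-R))^2) * htr
  · intro hE
    set A : ℝ := sA a R with hAd
    set B : ℝ := sB a R with hBd
    set p : ℝ := -z.re / A with hp
    set q : ℝ := z.im / B with hq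
    have hpq : p^2 + q^2 = 1 := by
      rw [hp, hq]
      field_simp
      linear_combination hE
    set w : ℂ := ⟨p, q⟩ with hw
    have habs : ‖w‖ = 1 := by
      rw [Complex.norm_def, Complex.normSq_mk]
      rw [show p * p + q * q = p^2 + q^2 by ring, hpq, Real.sqrt_one]
    have hw0 : w ≠ 0 := by
      intro h
      rw [h] at habs
      simp at habs
    have hcos : Real.cos (Complex.arg w) = p := by
      rw [Complex.cos_arg hw0, habs]
      simp [hw]
    have hsin : Real.sin (Complex.arg w) = q := by
      rw [Complex.sin_arg, habs]
      simp [hw]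
    refine ⟨Complex.arg w, ?_⟩
    rw [exp_I_ofReal, exp_neg_I_ofReal, hcos, hsin]
    have hrhs : (s:ℂ) * ((R:ℂ) * ((p:ℝ) + (q:ℝ)*Complex.I) - ((R:ℂ))⁻¹ * ((p:ℝ) - (q:ℝ)*Complex.I))
        = ((s*(R - R⁻¹)*p : ℝ):ℂ) + ((s*(R + R⁻¹)*q : ℝ):ℂ) * Complex.I := by
      simp only [Complex.ofReal_mul, Complex.ofReal_sub, Complex.ofReal_add, Complex.ofReal_inv]
      ring
    rw [hrhs]
    have hAe : s*(R - R⁻¹) = -A := by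
      rw [hAd]; unfold sA; rw [← hs]; ring
    have hBe : s*(R + R⁻¹) = B := by
      rw [hBd]; unfold sB; rw [← hs]; ring
    have hre : s*(R - R⁻¹)*p = z.re := by
      rw [hp, hAe]
      field_simp
    have him : s*(R + R⁻¹)*q = z.im := by
      rw [hq, hBe]
      field_simp
    rw [hre, him]
    apply Complex.ext <;> simp

lemma zero_not_mem_ellipse {a R : ℝ} (ha0 : 0 < a) (hR0 : 0 < R) (hR1 : R < 1) :
    (0:ℂ) ∉ ellipse a R := by
  rw [mem_ellipse_iff ha0 hR0 hR1]
  have hA0 : 0 < sA a R := sA_pos ha0 hR0 hR1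
  have hB0 : 0 < sB a R := sB_pos ha0 hR0
  simp only [Complex.zero_re, Complex.zero_im]
  intro h
  nlinarith [mul_pos (pow_pos hA0 2) (pow_pos hB0 2)]

lemma mem_ellipseInv_iff {a R : ℝ} (ha0 : 0 < a) (hR0 : 0 < R) (hR1 : R < 1) (z : ℂ) :
    z ∈ ellipseInv a R ↔ z ≠ 0 ∧ z⁻¹ ∈ ellipse a R := by
  constructor
  · rintro ⟨ω, hω, rfl⟩
    have hω0 : ω ≠ 0 := by
      intro h; rw [h] at hω; exact zero_not_mem_ellipse ha0 hR0 hR1 hω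
    exact ⟨inv_ne_zero hω0, by rwa [inv_inv]⟩
  · rintro ⟨hz0, hz⟩
    exact ⟨z⁻¹, hz, (inv_inv z).symm⟩

lemma mem_inter_iff {a R : ℝ} (ha0 : 0 < a) (hR0 : 0 < R) (hR1 : R < 1) (z : ℂ) :
    z ∈ ellipse a R ∩ ellipseInv a R ↔
      (z.re^2 + z.im^2 = 1 ∧
        sB a R ^ 2 * z.re ^ 2 + sA a R ^ 2 * z.im ^ 2 = sA a R ^ 2 * sB a R ^ 2) := by
  have hA0 : 0 < sA a R := sA_pos ha0 hR0 hR1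
  have hB0 : 0 < sB a R := sB_pos ha0 hR0
  constructor
  · rintro ⟨hz1, hz2⟩
    rw [mem_ellipseInv_iff ha0 hR0 hR1] at hz2
    obtain ⟨hz0, hzi⟩ := hz2
    rw [mem_ellipse_iff ha0 hR0 hR1] at hz1 hzi
    set n : ℝ := z.re^2 + z.im^2 with hn
    have hn0 : 0 < n := by
      rcases Complex.ext_iff.not.mp hz0 with h
      have := Complex.normSq_pos.mpr hz0
      rw [Complex.normSq_apply] at this
      nlinarith
    rw [Complex.inv_re, Complex.inv_im, Complex.normSq_apply] at hzi
    have hn' : z.re * z.re + z.im * z.im = n := by rw [hn]; ring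
    rw [hn'] at hzi
    have hzi' : sB a R ^2 * z.re^2 + sA a R^2*z.im^2 = sA a R^2 * sB a R^2 * n^2 := by
      have h2 : n ≠ 0 := hn0.ne'
      field_simp at hzi
      linear_combination hzi
    have hnn : n^2 = 1 := by
      rw [hz1] at hzi'
      have hAB : 0 < sA a R^2 * sB a R^2 := by positivity
      nlinarith
    have hn1 : n = 1 := by nlinarith
    exact ⟨hn1, hz1⟩
  · rintro ⟨hn1, hE⟩
    have hz0 : z ≠ 0 := by
      intro h
      rw [h] at hn1
      simp at hn1
    constructor
    · rw [mem_ellipse_iff ha0 hR0 hR1]; exact hE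
    · rw [mem_ellipseInv_iff ha0 hR0 hR1]
      refine ⟨hz0, ?_⟩
      rw [mem_ellipse_iff ha0 hR0 hR1]
      rw [Complex.inv_re, Complex.inv_im, Complex.normSq_apply]
      rw [show z.re * z.re + z.im * z.im = z.re^2 + z.im^2 by ring, hn1]
      simp only [div_one]
      rw [show (-z.im)^2 = z.im^2 by ring]
      exact hE

lemma sqrt_half_eq {a : ℝ} : Real.sqrt (cOf a / 2) = Real.sqrt (2 * cOf a) / 2 := by
  rw [show 2 * cOf a = (cOf a / 2) * 2^2 by ring, Real.sqrt_mul' _ (by norm_num : (0:ℝ) ≤ 2^2),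
    Real.sqrt_sq (by norm_num : (0:ℝ) ≤ 2)]
  ring

lemma sB_eq_one {a R : ℝ} (ha0 : 0 < a) (ha1 : a < 1) (hR0 : 0 < R)
    (h : R = (1 - Real.sqrt (1 - 2 * cOf a)) / Real.sqrt (2 * cOf a)) : sB a R = 1 := by
  have hc : 0 < cOf a := cOf_pos ha0
  have hc1 : 2 * cOf a < 1 := cOf_lt ha0 ha1
  set t : ℝ := Real.sqrt (2 * cOf a) with ht
  have ht0 : 0 < t := Real.sqrt_pos.mpr (by positivity)
  have ht2 : t^2 = 2 * cOf a := Real.sq_sqrt (by positivity)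
  set q : ℝ := Real.sqrt (1 - 2 * cOf a) with hqd
  have hq2 : q^2 = 1 - t^2 := by rw [hqd, Real.sq_sqrt (by linarith), ht2]
  have h1 : R * t = 1 - q := by rw [h]; field_simp
  have hkey : t * (t * R^2 - 2*R + t) = 0 := by linear_combination (R*t - 1 - q) * h1 + hq2
  have hkey2 : t * R^2 - 2*R + t = 0 := by
    rcases mul_eq_zero.mp hkey with h' | h'
    · exact absurd h' ht0.ne'
    · exact h'
  unfold sB
  rw [sqrt_half_eq, ← ht]
  field_simp
  linear_combination hkey2

lemma sA_eq_one {a R : ℝ} (ha0 : 0 < a) (ha1 : a < 1) (hR0 : 0 < R)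
    (h : R = (Real.sqrt (1 + 2 * cOf a) - 1) / Real.sqrt (2 * cOf a)) : sA a R = 1 := by
  have hc : 0 < cOf a := cOf_pos ha0
  set t : ℝ := Real.sqrt (2 * cOf a) with ht
  have ht0 : 0 < t := Real.sqrt_pos.mpr (by positivity)
  have ht2 : t^2 = 2 * cOf a := Real.sq_sqrt (by positivity)
  set p : ℝ := Real.sqrt (1 + 2 * cOf a) with hpd
  have hp2 : p^2 = 1 + t^2 := by rw [hpd, Real.sq_sqrt (by linarith), ht2]
  have h1 : R * t = p - 1 := by rw [h]; field_simp
  have hkey : t * (t * R^2 + 2*R - t) = 0 := by linear_combination (R*t + p + 1) * h1 + hp2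
  have hkey2 : t * R^2 + 2*R - t = 0 := by
    rcases mul_eq_zero.mp hkey with h' | h'
    · exact absurd h' ht0.ne'
    · exact h'
  unfold sA
  rw [sqrt_half_eq, ← ht]
  field_simp
  linear_combination (-1)*hkey2

lemma part2 {a R : ℝ} (ha0 : 0 < a) (ha1 : a < 1) (hR0 : 0 < R) (hR1 : R < 1)
    (h : R = (1 - Real.sqrt (1 - 2 * cOf a)) / Real.sqrt (2 * cOf a)) :
    ellipse a R ∩ ellipseInv a R = {Complex.I, -Complex.I} := by
  have hc : 0 < cOf a := cOf_pos ha0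
  have hB1 : sB a R = 1 := sB_eq_one ha0 ha1 hR0 h
  have hBA : sB a R^2 - sA a R^2 = 2 * cOf a := sBA ha0 hR0
  have hA2 : sA a R^2 = 1 - 2*cOf a := by rw [hB1] at hBA; linarith
  have hA1 : sA a R^2 < 1 := by linarith
  ext z
  rw [mem_inter_iff ha0 hR0 hR1]
  simp only [Set.mem_insert_iff, Set.mem_singleton_iff]
  constructor
  · rintro ⟨hn, hE⟩
    rw [hB1] at hE
    have hre0 : z.re = 0 := by
      have h1 : z.re^2 * (1 - sA a R^2) = 0 := by linear_combination hE - sA a R^2 * hn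
      have h2 : z.re^2 = 0 := by
        rcases mul_eq_zero.mp h1 with h' | h'
        · exact h'
        · linarith
      exact pow_eq_zero_iff (by norm_num) |>.mp h2
    have him : z.im^2 = 1 := by rw [hre0] at hn; linarith
    have him2 : z.im^2 = (1:ℝ)^2 := by rw [him]; ring
    rcases sq_eq_sq_iff_eq_or_eq_neg.mp him2 with h' | h'
    · left; apply Complex.ext <;> simp [hre0, h']
    · right; apply Complex.ext <;> simp [hre0, h']
  · rintro (rfl | rfl) <;>
      simp [hB1, hA2, Complex.I_re, Complex.I_im]

lemma part3 {a R : ℝ} (ha0 : 0 < a) (ha1 : a < 1) (hR0 : 0 < R) (hR1 : R < 1)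
    (h : R = (Real.sqrt (1 + 2 * cOf a) - 1) / Real.sqrt (2 * cOf a)) :
    ellipse a R ∩ ellipseInv a R = {1, -1} := by
  have hc : 0 < cOf a := cOf_pos ha0
  have hA1 : sA a R = 1 := sA_eq_one ha0 ha1 hR0 h
  have hBA : sB a R^2 - sA a R^2 = 2 * cOf a := sBA ha0 hR0
  have hB2 : sB a R^2 = 1 + 2*cOf a := by rw [hA1] at hBA; linarith
  have hB1 : 1 < sB a R^2 := by linarith
  ext z
  rw [mem_inter_iff ha0 hR0 hR1]
  simp only [Set.mem_insert_iff, Set.mem_singleton_iff]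
  constructor
  · rintro ⟨hn, hE⟩
    rw [hA1] at hE
    have him0 : z.im = 0 := by
      have h1 : z.im^2 * (sB a R^2 - 1) = 0 := by linear_combination sB a R^2 * hn - hE
      have h2 : z.im^2 = 0 := by
        rcases mul_eq_zero.mp h1 with h' | h'
        · exact h'
        · linarith
      exact pow_eq_zero_iff (by norm_num) |>.mp h2
    have hre : z.re^2 = (1:ℝ)^2 := by rw [him0] at hn; nlinarith
    rcases sq_eq_sq_iff_eq_or_eq_neg.mp hre with h' | h'
    · left; apply Complex.ext <;> simp [him0, h']
    · right; apply Complex.ext <;> simp [him0, h']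
  · rintro (rfl | rfl) <;>
      simp [hA1, hB2, Complex.one_re, Complex.one_im] <;> ring

set_option maxHeartbeats 1000000 in
lemma part1 {a R : ℝ} (ha0 : 0 < a) (ha1 : a < 1) (hR0 : 0 < R) (hR1 : R < 1)
    (hlo : (Real.sqrt (1 + 2 * cOf a) - 1) / Real.sqrt (2 * cOf a) < R)
    (hhi : R < (1 - Real.sqrt (1 - 2 * cOf a)) / Real.sqrt (2 * cOf a)) :
      ∃ θc : ℝ, 0 < θc ∧ θc < Real.pi / 2 ∧
        ellipse a R ∩ ellipseInv a R =
          {Complex.exp (Complex.I * (θc : ℂ)), Complex.exp (-(Complex.I * (θc : ℂ))),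
            -Complex.exp (Complex.I * (θc : ℂ)), -Complex.exp (-(Complex.I * (θc : ℂ)))} ∧
        (ellipse a R ∩ ellipseInv a R).ncard = 4 ∧
        ‖Gbr a (Complex.exp (Complex.I * (θc : ℂ)))‖ = R := by
  have hc : 0 < cOf a := cOf_pos ha0
  have hc1 : 2 * cOf a < 1 := cOf_lt ha0 ha1
  set t : ℝ := Real.sqrt (2 * cOf a) with ht
  have ht0 : 0 < t := Real.sqrt_pos.mpr (by positivity)
  have ht2 : t^2 = 2 * cOf a := Real.sq_sqrt (by positivity)
  set A : ℝ := sA a R with hAd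
  set B : ℝ := sB a R with hBd
  have hA0 : 0 < A := sA_pos ha0 hR0 hR1
  have hB0 : 0 < B := sB_pos ha0 hR0
  have hBA : B^2 - A^2 = t^2 := by rw [hAd, hBd, ht2]; exact sBA ha0 hR0
  -- A < 1
  have hA1 : A < 1 := by
    set p : ℝ := Real.sqrt (1 + 2 * cOf a) with hpd
    have hp0 : 0 ≤ p := Real.sqrt_nonneg _
    have hp2 : p^2 = 1 + t^2 := by rw [hpd, Real.sq_sqrt (by linarith), ht2]
    have h1 : p - 1 < R * t := by
      rw [div_lt_iff₀ ht0] at hlo; linarith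
    have hf1 : 0 < t*R + 1 - p := by nlinarith
    have hf2 : 0 < t*R + 1 + p := by nlinarith
    have hprod := mul_pos hf1 hf2
    have hkey : 0 < t * (t*R^2 + 2*R - t) := by
      calc (0:ℝ) < (t*R + 1 - p) * (t*R + 1 + p) := hprod
        _ = t * (t*R^2 + 2*R - t) := by linear_combination (-1)*hp2
    have hkey2 : 0 < t*R^2 + 2*R - t := by
      by_contra hX
      push_neg at hX
      nlinarith [mul_nonneg ht0.le (neg_nonneg.mpr hX)]
    have hAe : A = t*(1-R^2)/(2*R) := by
      rw [hAd]; unfold sA; rw [sqrt_half_eq, ← ht,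
        eq_div_iff (by positivity : (0:ℝ) < 2*R).ne']
      field_simp
    rw [hAe, div_lt_iff₀ (by positivity)]
    nlinarith
  -- 1 < B
  have hB1 : 1 < B := by
    set q : ℝ := Real.sqrt (1 - 2 * cOf a) with hqd
    have hq0 : 0 ≤ q := Real.sqrt_nonneg _
    have hq2 : q^2 = 1 - t^2 := by rw [hqd, Real.sq_sqrt (by linarith), ht2]
    have h1 : R * t < 1 - q := by
      rw [lt_div_iff₀ ht0] at hhi; linarith
    have hf1 : 0 < 1 - t*R - q := by nlinarith
    have hf2 : 0 < 1 - t*R + q := by nlinarith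
    have hprod := mul_pos hf1 hf2
    have hkey : 0 < t * (t*R^2 - 2*R + t) := by
      calc (0:ℝ) < (1 - t*R - q) * (1 - t*R + q) := hprod
        _ = t * (t*R^2 - 2*R + t) := by linear_combination (-1)*hq2
    have hkey2 : 0 < t*R^2 - 2*R + t := by
      by_contra hX
      push_neg at hX
      nlinarith [mul_nonneg ht0.le (neg_nonneg.mpr hX)]
    have hBe : B = t*(1+R^2)/(2*R) := by
      rw [hBd]; unfold sB; rw [sqrt_half_eq, ← ht,
        eq_div_iff (by positivity : (0:ℝ) < 2*R).ne']
      field_simp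
    rw [hBe, lt_div_iff₀ (by positivity)]
    nlinarith
  -- the special point
  obtain ⟨x0, hx0d⟩ : ∃ x : ℝ, x = A * Real.sqrt (B^2 - 1) / t := ⟨_, rfl⟩
  obtain ⟨y0, hy0d⟩ : ∃ y : ℝ, y = B * Real.sqrt (1 - A^2) / t := ⟨_, rfl⟩
  have hsb1 : (0:ℝ) < Real.sqrt (B^2 - 1) := Real.sqrt_pos.mpr (by nlinarith)
  have hsa1 : (0:ℝ) < Real.sqrt (1 - A^2) := Real.sqrt_pos.mpr (by nlinarith)
  have ht2ne : (t:ℝ)^2 ≠ 0 := by positivity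
  have hx0 : 0 < x0 := by rw [hx0d]; positivity
  have hy0 : 0 < y0 := by rw [hy0d]; positivity
  have hx2 : t^2 * x0^2 = A^2 * (B^2 - 1) := by
    rw [hx0d, div_pow, mul_pow, Real.sq_sqrt (by nlinarith : (0:ℝ) ≤ B^2 - 1), mul_comm,
      div_mul_cancel₀ _ ht2ne]
  have hy2 : t^2 * y0^2 = B^2 * (1 - A^2) := by
    rw [hy0d, div_pow, mul_pow, Real.sq_sqrt (by nlinarith : (0:ℝ) ≤ 1 - A^2), mul_comm,
      div_mul_cancel₀ _ ht2ne]
  have hxy : x0^2 + y0^2 = 1 := by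
    have h1 : t^2 * (x0^2 + y0^2) = t^2 * 1 := by linear_combination hx2 + hy2 + hBA
    exact mul_left_cancel₀ ht2ne h1
  have hx1 : x0 < 1 := by nlinarith
  have hy1 : y0 < 1 := by nlinarith
  set θc : ℝ := Real.arcsin y0 with hθd
  have hθ1 : 0 < θc := Real.arcsin_pos.mpr hy0
  have hθ2 : θc < Real.pi / 2 := Real.arcsin_lt_pi_div_two.mpr hy1
  have hsin : Real.sin θc = y0 := Real.sin_arcsin (by linarith) hy1.le
  have hcos : Real.cos θc = x0 := by
    rw [hθd, Real.cos_arcsin, show 1 - y0^2 = x0^2 by linarith, Real.sqrt_sq hx0.le]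
  have hp1 : Complex.exp (Complex.I * (θc:ℂ)) = ((x0:ℝ):ℂ) + ((y0:ℝ):ℂ) * Complex.I := by
    rw [exp_I_ofReal, hcos, hsin]
  have hp2 : Complex.exp (-(Complex.I * (θc:ℂ))) = ((x0:ℝ):ℂ) - ((y0:ℝ):ℂ) * Complex.I := by
    rw [exp_neg_I_ofReal, hcos, hsin]
  have hkeyE : B^2 * x0^2 + A^2 * y0^2 = A^2 * B^2 := by
    have h1 : t^2 * (B^2 * x0^2 + A^2 * y0^2) = t^2 * (A^2 * B^2) := by
      linear_combination B^2*hx2 + A^2*hy2 + A^2*B^2*hBA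
    exact mul_left_cancel₀ ht2ne h1
  have hseteq : ellipse a R ∩ ellipseInv a R =
      {Complex.exp (Complex.I * (θc : ℂ)), Complex.exp (-(Complex.I * (θc : ℂ))),
        -Complex.exp (Complex.I * (θc : ℂ)), -Complex.exp (-(Complex.I * (θc : ℂ)))} := by
    ext z
    rw [mem_inter_iff ha0 hR0 hR1, ← hAd, ← hBd]
    simp only [Set.mem_insert_iff, Set.mem_singleton_iff, hp1, hp2]
    constructor
    · rintro ⟨hn, hE⟩
      have h1 : t^2 * z.re^2 = t^2 * x0^2 := by
        linear_combination (-z.re^2) * hBA + hE + (-A^2) * hn + (-1) * hx2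
      have hxx : z.re^2 = x0^2 := mul_left_cancel₀ ht2ne h1
      have hyy : z.im^2 = y0^2 := by nlinarith
      rcases sq_eq_sq_iff_eq_or_eq_neg.mp hxx with hx | hx <;>
        rcases sq_eq_sq_iff_eq_or_eq_neg.mp hyy with hy | hy
      · exact Or.inl (by apply Complex.ext <;> simp [hx, hy])
      · exact Or.inr (Or.inl (by apply Complex.ext <;> simp [hx, hy]))
      · exact Or.inr (Or.inr (Or.inr (by apply Complex.ext <;> simp [hx, hy])))
      · exact Or.inr (Or.inr (Or.inl (by apply Complex.ext <;> simp [hx, hy])))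
    · rintro (rfl | rfl | rfl | rfl) <;>
        constructor <;>
        simp only [Complex.add_re, Complex.add_im, Complex.sub_re, Complex.sub_im,
          Complex.neg_re, Complex.neg_im, Complex.mul_re, Complex.mul_im,
          Complex.ofReal_re, Complex.ofReal_im, Complex.I_re, Complex.I_im] <;>
        ring_nf <;>
        first
          | linarith [hxy]
          | linear_combination hkeyE
  have hy00 : y0 ≠ -y0 := by intro h; linarith
  have hx00 : x0 ≠ -x0 := by intro h; linarith
  have ne12 : ((x0:ℝ):ℂ) + ((y0:ℝ):ℂ)*Complex.I ≠ ((x0:ℝ):ℂ) - ((y0:ℝ):ℂ)*Complex.I := by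
    intro h; have h2 := congrArg Complex.im h; simp at h2; linarith
  have ne13 : ((x0:ℝ):ℂ) + ((y0:ℝ):ℂ)*Complex.I ≠ -(((x0:ℝ):ℂ) + ((y0:ℝ):ℂ)*Complex.I) := by
    intro h; have h2 := congrArg Complex.re h; simp at h2; linarith
  have ne14 : ((x0:ℝ):ℂ) + ((y0:ℝ):ℂ)*Complex.I ≠ -(((x0:ℝ):ℂ) - ((y0:ℝ):ℂ)*Complex.I) := by
    intro h; have h2 := congrArg Complex.re h; simp at h2; linarith
  have ne23 : ((x0:ℝ):ℂ) - ((y0:ℝ):ℂ)*Complex.I ≠ -(((x0:ℝ):ℂ) + ((y0:ℝ):ℂ)*Complex.I) := by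
    intro h; have h2 := congrArg Complex.re h; simp at h2; linarith
  have ne24 : ((x0:ℝ):ℂ) - ((y0:ℝ):ℂ)*Complex.I ≠ -(((x0:ℝ):ℂ) - ((y0:ℝ):ℂ)*Complex.I) := by
    intro h; have h2 := congrArg Complex.re h; simp at h2; linarith
  have ne34 : -(((x0:ℝ):ℂ) + ((y0:ℝ):ℂ)*Complex.I) ≠ -(((x0:ℝ):ℂ) - ((y0:ℝ):ℂ)*Complex.I) := by
    intro h; have h2 := congrArg Complex.im h; simp at h2; linarith
  refine ⟨θc, hθ1, hθ2, hseteq, ?_, ?_⟩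
  · rw [hseteq, hp1, hp2]
    have hnm1 : ((x0:ℝ):ℂ) + ((y0:ℝ):ℂ)*Complex.I ∉
        ({((x0:ℝ):ℂ) - ((y0:ℝ):ℂ)*Complex.I, -(((x0:ℝ):ℂ) + ((y0:ℝ):ℂ)*Complex.I),
          -(((x0:ℝ):ℂ) - ((y0:ℝ):ℂ)*Complex.I)} : Set ℂ) := by
      simp only [Set.mem_insert_iff, Set.mem_singleton_iff]
      push_neg
      exact ⟨ne12, ne13, ne14⟩
    have hnm2 : ((x0:ℝ):ℂ) - ((y0:ℝ):ℂ)*Complex.I ∉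
        ({-(((x0:ℝ):ℂ) + ((y0:ℝ):ℂ)*Complex.I),
          -(((x0:ℝ):ℂ) - ((y0:ℝ):ℂ)*Complex.I)} : Set ℂ) := by
      simp only [Set.mem_insert_iff, Set.mem_singleton_iff]
      push_neg
      exact ⟨ne23, ne24⟩
    rw [Set.ncard_insert_of_notMem hnm1, Set.ncard_insert_of_notMem hnm2,
      Set.ncard_pair ne34]
  · have hmem : Complex.exp (Complex.I * (θc : ℂ)) ∈ ellipse a R ∩ ellipseInv a R := by
      rw [hseteq]; exact Set.mem_insert _ _
    have hre : 0 < (Complex.exp (Complex.I * (θc:ℂ))).re := by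
      rw [hp1]; simp [hx0]
    exact abs_Gbr ha0 ha1 hR0 hR1 hmem.1 hre


/-- (1) If `(√(1+2c)-1)/√(2c) < R < (1-√(1-2c))/√(2c)`, then there exists
`θ_c ∈ (0, π/2)` such that `γ_R ∩ γ̃_R = {e^{iθ_c}, e^{-iθ_c}, -e^{iθ_c}, -e^{-iθ_c}}`
(four distinct points on the unit circle) and `|G(e^{iθ_c})| = R`;
(2) if `R = (1-√(1-2c))/√(2c)` then `γ_R ∩ γ̃_R = {i, -i}`;
(3) if `R = (√(1+2c)-1)/√(2c)` then `γ_R ∩ γ̃_R = {1, -1}`. -/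
theorem statement15 (a : ℝ) (ha0 : 0 < a) (ha1 : a < 1) (R : ℝ)
    (hR0 : 0 < R) (hR1 : R < 1) :
    (((Real.sqrt (1 + 2 * cOf a) - 1) / Real.sqrt (2 * cOf a) < R ∧
        R < (1 - Real.sqrt (1 - 2 * cOf a)) / Real.sqrt (2 * cOf a)) →
      ∃ θc : ℝ, 0 < θc ∧ θc < Real.pi / 2 ∧
        ellipse a R ∩ ellipseInv a R =
          {Complex.exp (Complex.I * (θc : ℂ)), Complex.exp (-(Complex.I * (θc : ℂ))),
            -Complex.exp (Complex.I * (θc : ℂ)), -Complex.exp (-(Complex.I * (θc : ℂ)))} ∧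
        (ellipse a R ∩ ellipseInv a R).ncard = 4 ∧
        ‖Gbr a (Complex.exp (Complex.I * (θc : ℂ)))‖ = R) ∧
    (R = (1 - Real.sqrt (1 - 2 * cOf a)) / Real.sqrt (2 * cOf a) →
      ellipse a R ∩ ellipseInv a R = {Complex.I, -Complex.I}) ∧
    (R = (Real.sqrt (1 + 2 * cOf a) - 1) / Real.sqrt (2 * cOf a) →
      ellipse a R ∩ ellipseInv a R = {1, -1}) := by
  exact ⟨fun h => part1 ha0 ha1 hR0 hR1 h.1 h.2,
    fun h => part2 ha0 ha1 hR0 hR1 h,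
    fun h => part3 ha0 ha1 hR0 hR1 h⟩
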